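/- Let (R, m, k) be a noetherian local ring and φ: R → A a flat local homomorphism of noetherian local rings such that A/mA is reduced and A is reduced. Then mA = mB ∩ A for any finite ring extension A ⊆ B inside the total quotient ring of A; in particular the induced map A/mA → B/mB is injective, and B/mB is a finite module over A/mA of the same Krull dimension. -/

import Mathlib

set_option synthInstance.maxHeartbeats 1000000
set_option maxHeartbeats 1000000

universe u v w

section Aux

variable {S : Type*} {T : Type*} [CommRing S] [CommRing T]

/-- Going-up for chains: given an injective integral extension, any chain of primes
downstairs lifts to a chain of primes upstairs of the same length. -/
lemma aux_exists_ltSeries [Algebra S T] [Algebra.IsIntegral S T]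
    (hinj : Function.Injective (algebraMap S T)) (p : LTSeries (PrimeSpectrum S)) :
    ∃ q : LTSeries (PrimeSpectrum T), q.length = p.length ∧
      q.last.asIdeal.comap (algebraMap S T) = p.last.asIdeal := by
  have hker : (⊥ : Ideal T).comap (algebraMap S T) = ⊥ := by
    rw [← RingHom.ker_eq_comap_bot, ← RingHom.injective_iff_ker_eq_bot]
    exact hinj
  suffices h : ∀ (n : ℕ) (p : LTSeries (PrimeSpectrum S)), p.length = n →
      ∃ q : LTSeries (PrimeSpectrum T), q.length = p.length ∧
        q.last.asIdeal.comap (algebraMap S T) = p.last.asIdeal from h p.length p rfl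
  intro n
  induction n with
  | zero =>
      intro p hn
      haveI := p.last.isPrime
      obtain ⟨Q, -, hQ, hQc⟩ := Ideal.exists_ideal_over_prime_of_isIntegral
        p.last.asIdeal ⊥ (hker ▸ bot_le)
      exact ⟨RelSeries.singleton _ ⟨Q, hQ⟩, by simpa using hn.symm, hQc⟩
  | succ n ih =>
      intro p hn
      have h0 : p.length ≠ 0 := by omega
      obtain ⟨q, hqlen, hqc⟩ := ih p.eraseLast (by simp [hn])
      haveI := p.last.isPrime
      have hlt : p.eraseLast.last < p.last := p.eraseLast_last_rel_last h0
      obtain ⟨Q, hgeQ, hQ, hQc⟩ := Ideal.exists_ideal_over_prime_of_isIntegral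
        p.last.asIdeal q.last.asIdeal
        (by rw [hqc]; exact le_of_lt ((PrimeSpectrum.asIdeal_lt_asIdeal _ _).mpr hlt))
      have hQlt : q.last < (⟨Q, hQ⟩ : PrimeSpectrum T) := by
        rw [← PrimeSpectrum.asIdeal_lt_asIdeal]
        refine lt_of_le_of_ne hgeQ fun h => ?_
        have : p.eraseLast.last.asIdeal = p.last.asIdeal := by rw [← hqc, h, hQc]
        exact ne_of_lt ((PrimeSpectrum.asIdeal_lt_asIdeal _ _).mpr hlt) this
      refine ⟨q.snoc ⟨Q, hQ⟩ hQlt, ?_, ?_⟩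
      · rw [RelSeries.snoc_length, hqlen, RelSeries.eraseLast_length]; omega
      · rw [RelSeries.last_snoc]; exact hQc

/-- An injective integral ring homomorphism preserves Krull dimension. -/
lemma aux_ringKrullDim_eq_of_isIntegral (f : S →+* T) (hint : f.IsIntegral)
    (hinj : Function.Injective f) : ringKrullDim T = ringKrullDim S := by
  letI : Algebra S T := f.toAlgebra
  haveI : Algebra.IsIntegral S T := ⟨hint⟩
  have halg : algebraMap S T = f := rfl
  apply le_antisymm
  · apply Order.krullDim_le_of_strictMono
      (fun q : PrimeSpectrum T => PrimeSpectrum.comap (algebraMap S T) q)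
    intro q1 q2 h
    rw [← PrimeSpectrum.asIdeal_lt_asIdeal] at h ⊢
    obtain ⟨x, hx2, hx1⟩ := SetLike.exists_of_lt h
    exact Ideal.comap_lt_comap_of_integral_mem_sdiff (le_of_lt h) ⟨hx2, hx1⟩
      (Algebra.IsIntegral.isIntegral x)
  · rw [ringKrullDim, ringKrullDim, Order.krullDim, Order.krullDim]
    refine iSup_le fun p => ?_
    obtain ⟨q, hlen, -⟩ := aux_exists_ltSeries (halg ▸ hinj) p
    exact hlen ▸ le_iSup (fun q : LTSeries (PrimeSpectrum T) =>
      (q.length : WithBot (WithTop ℕ))) q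

end Aux

/-- Let `(R, m, k) → A` be a flat local homomorphism of noetherian local rings with `A`
and `A/mA` reduced, and let `B` be a finite ring extension of `A` inside the total
quotient ring `K` of `A`.  Then `mA = mB ∩ A`; in particular the induced map
`A/mA → B/mB` is injective, and `B/mB` is a finite module over `A/mA` of the same Krull
dimension. -/
theorem contraction_of_extended_maximal_ideal
    (R : Type u) [CommRing R] [IsNoetherianRing R] [IsLocalRing R]
    (A : Type v) [CommRing A] [IsNoetherianRing A] [IsLocalRing A] [IsReduced A]
    [Algebra R A] [IsLocalHom (algebraMap R A)] [Module.Flat R A]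
    (hred : IsReduced (A ⧸ (IsLocalRing.maximalIdeal R).map (algebraMap R A)))
    (K : Type w) [CommRing K] [Algebra A K] [IsFractionRing A K]
    [Algebra R K] [IsScalarTower R A K]
    (B : Subalgebra A K) [Module.Finite A B] :
    ((IsLocalRing.maximalIdeal R).map (algebraMap R B)).comap (algebraMap A B) =
      (IsLocalRing.maximalIdeal R).map (algebraMap R A) ∧
    Function.Injective
      (Ideal.quotientMap (I := (IsLocalRing.maximalIdeal R).map (algebraMap R A))
        ((IsLocalRing.maximalIdeal R).map (algebraMap R B))
        (algebraMap A B)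
        (by rw [Ideal.map_le_iff_le_comap, Ideal.comap_comap, ← IsScalarTower.algebraMap_eq]
            exact Ideal.le_comap_map)) ∧
    Module.Finite A (B ⧸ (IsLocalRing.maximalIdeal R).map (algebraMap R B)) ∧
    ringKrullDim (B ⧸ (IsLocalRing.maximalIdeal R).map (algebraMap R B)) =
      ringKrullDim (A ⧸ (IsLocalRing.maximalIdeal R).map (algebraMap R A)) := by
  set m := IsLocalRing.maximalIdeal R with hm
  set I := m.map (algebraMap R A) with hI
  set J := m.map (algebraMap R B) with hJ
  set f := algebraMap A B with hf
  -- basic facts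
  have hf_inj : Function.Injective f := by
    intro x y h
    apply IsFractionRing.injective A K
    have h2 := congrArg (B.val : B →ₐ[A] K) h
    rw [hf, B.val.commutes x, B.val.commutes y] at h2
    exact h2
  have hJI : J = I.map f := by
    rw [hJ, hI, Ideal.map_map, ← IsScalarTower.algebraMap_eq]
  have hrad : I.IsRadical := (Ideal.isRadical_iff_quotient_reduced I).mpr hred
  have hker : (⊥ : Ideal B).comap f = ⊥ := by
    rw [← RingHom.ker_eq_comap_bot, ← RingHom.injective_iff_ker_eq_bot]
    exact hf_inj
  -- the contraction
  have hle : J.comap f ≤ I := by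
    conv_rhs => rw [← hrad.radical]
    rw [Ideal.radical_eq_sInf]
    refine le_sInf ?_
    rintro p ⟨hIp, hp⟩
    haveI := hp
    obtain ⟨Q, -, hQ, hQc⟩ := Ideal.exists_ideal_over_prime_of_isIntegral p ⊥ (hker ▸ bot_le)
    have hJQ : J ≤ Q := by
      rw [hJI, Ideal.map_le_iff_le_comap, hQc]
      exact hIp
    exact le_trans (Ideal.comap_mono hJQ) (le_of_eq hQc)
  have h1 : J.comap f = I := le_antisymm hle (hJI ▸ Ideal.le_comap_map)
  refine ⟨h1, Ideal.quotientMap_injective' hle, ?_, ?_⟩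
  · -- finiteness of B/J over A
    exact Module.Finite.of_surjective (Ideal.Quotient.mkₐ A J).toLinearMap
      (Ideal.Quotient.mkₐ_surjective A J)
  · -- Krull dimension
    have H : I ≤ J.comap f := h1.ge
    have hint : (Ideal.quotientMap J f H).IsIntegral := by
      rintro ⟨x⟩
      obtain ⟨p, pmonic, hpx⟩ := (Algebra.IsIntegral.isIntegral (R := A) x : IsIntegral A x)
      refine ⟨p.map (Ideal.Quotient.mk I), pmonic.map _, ?_⟩
      have := congrArg (Ideal.Quotient.mk J) hpx
      rw [map_zero] at this
      change Polynomial.eval₂ _ (Ideal.Quotient.mk J x) _ = 0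
      simpa only [Polynomial.hom_eval₂, Polynomial.eval₂_map,
        Ideal.quotientMap_comp_mk H] using this
    exact aux_ringKrullDim_eq_of_isIntegral _ hint (Ideal.quotientMap_injective' hle)
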